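/- Let Z be a unique factorization domain with fraction field Q, and let P_1,…,P_s ∈ Z[x_1,…,x_r] (s ≥ 2, r ≥ 1) be nonzero polynomials that are coprime in Q[x]. Then there exists a nonzero element R_0 ∈ Z with the property: for every prime ideal 𝔭 ⊂ Z with R_0 ∉ 𝔭, the reductions of P_1,…,P_s modulo 𝔭, viewed in k^𝔭[x] where k^𝔭 is the fraction field of the integral domain Z/𝔭, are coprime in k^𝔭[x]. -/

import Mathlib

open MvPolynomial


lemma my_totalDegree_eq_zero {σ R : Type*} [CommSemiring R] {D : MvPolynomial σ R}
    (h : ∀ j, degreeOf j D = 0) : D.totalDegree = 0 := by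
  apply Nat.eq_zero_of_le_zero
  apply Finset.sup_le
  intro m hm
  have hm0 : m = 0 := by
    ext j
    have : m j ≤ degreeOf j D := by
      rw [degreeOf_eq_sup]
      exact Finset.le_sup (f := fun m => m j) hm
    rw [h j] at this
    simpa using Nat.le_zero.mp this
  simp [hm0]

lemma my_totalDegree_map_eq {σ R S : Type*} [CommSemiring R] [CommSemiring S]
    {f : R →+* S} (hf : Function.Injective f) (p : MvPolynomial σ R) :
    (p.map f).totalDegree = p.totalDegree := by
  rw [totalDegree, totalDegree, MvPolynomial.support_map_of_injective p hf]

lemma my_degreeOf_map_le {σ R S : Type*} [CommSemiring R] [CommSemiring S]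
    (f : R →+* S) (j : σ) (p : MvPolynomial σ R) :
    degreeOf j (p.map f) ≤ degreeOf j p := by
  rw [degreeOf_eq_sup, degreeOf_eq_sup]
  exact Finset.sup_mono (MvPolynomial.support_map_subset _ _)

lemma my_degreeOf_le_of_dvd {k : Type*} [CommRing k] [IsDomain k] {n : ℕ}
    {D c : MvPolynomial (Fin (n + 1)) k} (j : Fin (n + 1)) (h : D ∣ c) (hc : c ≠ 0) :
    degreeOf j D ≤ degreeOf j c := by
  set τ := Equiv.swap (0 : Fin (n + 1)) j with hτ
  have hkey : ∀ p : MvPolynomial (Fin (n + 1)) k,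
      (MvPolynomial.finSuccEquiv k n (rename τ p)).natDegree = degreeOf j p := by
    intro p
    rw [natDegree_finSuccEquiv]
    have := degreeOf_rename_of_injective (p := p) (f := ⇑τ) τ.injective j
    rwa [hτ, Equiv.swap_apply_right] at this
  have hd : MvPolynomial.finSuccEquiv k n (rename τ D) ∣
      MvPolynomial.finSuccEquiv k n (rename τ c) := by
    exact _root_.map_dvd ((MvPolynomial.finSuccEquiv k n).toRingHom.comp
      (MvPolynomial.rename τ).toRingHom) h
  have hc' : MvPolynomial.finSuccEquiv k n (rename τ c) ≠ 0 := by
    intro h0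
    apply hc
    have := congrArg (MvPolynomial.finSuccEquiv k n).symm h0
    simp only [AlgEquiv.symm_apply_apply, map_zero] at this
    have := congrArg (rename ⇑τ.symm) this
    rwa [rename_rename, Equiv.symm_comp_self, rename_id, map_zero] at this
  have := Polynomial.natDegree_le_of_dvd hd hc'
  rwa [hkey, hkey] at this

open scoped nonZeroDivisors

set_option maxHeartbeats 1000000 in
set_option synthInstance.maxHeartbeats 400000 in
lemma my_bezout_aux (Z Q : Type*) [CommRing Z] [IsDomain Z] [UniqueFactorizationMonoid Z]
    [Field Q] [Algebra Z Q] [IsFractionRing Z Q] (s n : ℕ) (i0 : Fin s)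
    (P : Fin s → MvPolynomial (Fin (n + 1)) Z) (hP : ∀ i, P i ≠ 0)
    (hcop : ∀ D : MvPolynomial (Fin (n + 1)) Q,
      (∀ i, D ∣ (P i).map (algebraMap Z Q)) → D.totalDegree = 0) :
    ∃ (E : Fin s → MvPolynomial (Fin (n + 1)) Z) (G : MvPolynomial (Fin (n + 1)) Z),
      G ≠ 0 ∧ degreeOf 0 G = 0 ∧ ∑ i, E i * P i = G := by
  classical
  letI : NormalizationMonoid (MvPolynomial (Fin n) Z) :=
    UniqueFactorizationMonoid.normalizationMonoid.toNormalizationMonoid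
  letI : NormalizedGCDMonoid (MvPolynomial (Fin n) Z) :=
    UniqueFactorizationMonoid.toNormalizedGCDMonoid _
  set A := MvPolynomial (Fin n) Z with hA
  set K := FractionRing A with hK
  set e := MvPolynomial.finSuccEquiv Z n with he
  set f : A →+* K := algebraMap A K with hf
  have finj : Function.Injective f := IsFractionRing.injective A K
  set p : Fin s → Polynomial A := fun i => e (P i) with hp
  have hp0 : ∀ i, p i ≠ 0 := by
    intro i h0
    apply hP i
    apply e.injective
    rw [map_zero]
    exact h0
  set pK : Fin s → Polynomial K := fun i => (p i).map f with hpK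
  have hpK0 : ∀ i, pK i ≠ 0 := fun i h0 =>
    hp0 i (Polynomial.map_injective f finj (by simpa using h0))
  -- the span of the pK i is principal
  obtain ⟨g, hg⟩ := (IsPrincipalIdealRing.principal (Ideal.span (Set.range pK))).principal
  have hmem : ∀ i, pK i ∈ Ideal.span (Set.range pK) := fun i =>
    Ideal.subset_span ⟨i, rfl⟩
  have hgd : ∀ i, g ∣ pK i := by
    intro i
    have := hmem i
    rw [hg] at this
    exact Ideal.mem_span_singleton.mp this
  have hg0 : g ≠ 0 := by
    intro h0
    exact hpK0 i0 (zero_dvd_iff.mp (h0 ▸ hgd i0))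
  -- clear denominators of g and take its primitive part
  have hsmul : ∀ (r : A) (x : Polynomial K), r • x = Polynomial.C (f r) * x := by
    intro r x
    ext m
    simp [Polynomial.coeff_smul, Algebra.smul_def, hf]
  obtain ⟨c, hc⟩ := IsLocalization.integerNormalization_map_to_map A⁰ g
  rw [hsmul] at hc
  rw [← hf] at hc
  set d' := IsLocalization.integerNormalization A⁰ g with hd'
  have hcA : (c : A) ≠ 0 := nonZeroDivisors.ne_zero c.2
  have hcK : f (c : A) ≠ 0 := fun h0 => hcA (finj (by simpa using h0))
  have hd'0 : d' ≠ 0 := by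
    intro h0
    rw [h0, Polynomial.map_zero] at hc
    rcases mul_eq_zero.mp hc.symm with h | h
    · exact hcK (by simpa using h)
    · exact hg0 h
  set d0 := d'.primPart with hd0
  -- d0 divides every p i (Gauss)
  have hd0dvd : ∀ i, d0 ∣ p i := by
    intro i
    have h1 : d0.map f ∣ Polynomial.C (f (c : A)) * g := by
      rw [← hc]
      exact Polynomial.map_dvd f d'.primPart_dvd
    have h2 : d0.map f ∣ g :=
      h1.trans ⟨Polynomial.C (f (c : A))⁻¹, by
        rw [mul_comm, ← mul_assoc, ← Polynomial.C_mul, inv_mul_cancel₀ hcK,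
          Polynomial.C_1, one_mul]⟩
    have hcont : f ((p i).content) ≠ 0 := fun h0 =>
      hp0 i (Polynomial.content_eq_zero_iff.mp (finj (by simpa using h0)))
    have h3 : pK i ∣ (p i).primPart.map f := by
      refine ⟨Polynomial.C (f ((p i).content))⁻¹, ?_⟩
      have h30 : pK i = Polynomial.C (f ((p i).content)) * (p i).primPart.map f := by
        show Polynomial.map f (p i) = _
        conv_lhs => rw [(p i).eq_C_content_mul_primPart]
        rw [Polynomial.map_mul, Polynomial.map_C]
      rw [h30, mul_comm (Polynomial.C (f ((p i).content))) _, mul_assoc, ← Polynomial.C_mul,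
        mul_inv_cancel₀ hcont, Polynomial.C_1, mul_one]
    have h4 : d0.map f ∣ (p i).primPart.map f := (h2.trans (hgd i)).trans h3
    exact (Polynomial.IsPrimitive.dvd_of_fraction_map_dvd_fraction_map
      d'.isPrimitive_primPart h4).trans (p i).primPart_dvd
  -- use coprimality over Q to see that d0 is constant
  have hndd0 : d0.natDegree = 0 := by
    set D0 := e.symm d0 with hD0
    have heD0 : e D0 = d0 := e.apply_symm_apply d0
    have hD0dvd : ∀ i, D0 ∣ P i := by
      intro i
      have h5 := _root_.map_dvd e.symm (hd0dvd i)
      rwa [show e.symm (p i) = P i from e.symm_apply_apply (P i)] at h5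
    have hQ : ((MvPolynomial.map (algebraMap Z Q)) D0).totalDegree = 0 :=
      hcop _ fun i => _root_.map_dvd (MvPolynomial.map (algebraMap Z Q)) (hD0dvd i)
    have hTD : D0.totalDegree = 0 := by
      rwa [my_totalDegree_map_eq (IsFractionRing.injective Z Q) D0] at hQ
    have hdeg0 : degreeOf 0 D0 = 0 :=
      Nat.le_zero.mp (by have := degreeOf_le_totalDegree D0 0; omega)
    have h6 := natDegree_finSuccEquiv D0
    rw [← he, heD0, hdeg0] at h6
    exact h6
  -- compute natDegree g = 0
  have hndg : g.natDegree = 0 := by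
    have h1 : (d'.map f).natDegree = d'.natDegree :=
      Polynomial.natDegree_map_eq_of_injective finj d'
    rw [hc, Polynomial.natDegree_C_mul hcK] at h1
    have h2 : d'.natDegree = d0.natDegree := by
      conv_lhs => rw [d'.eq_C_content_mul_primPart]
      exact Polynomial.natDegree_C_mul fun h0 =>
        hd'0 (Polynomial.content_eq_zero_iff.mp h0)
    omega
  -- g is a unit, so the span is everything
  obtain ⟨a0, ha0⟩ := Polynomial.natDegree_eq_zero.mp hndg
  have ha00 : a0 ≠ 0 := fun h0 => hg0 (by rw [← ha0, h0, Polynomial.C_0])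
  have hgu : IsUnit g := ha0 ▸ Polynomial.isUnit_C.mpr (isUnit_iff_ne_zero.mpr ha00)
  have htop : (1 : Polynomial K) ∈ Ideal.span (Set.range pK) := by
    rw [hg]
    exact (Ideal.eq_top_iff_one (Ideal.span {g})).mp (Ideal.span_singleton_eq_top.mpr hgu)
  obtain ⟨a, ha⟩ := (Submodule.mem_span_range_iff_exists_fun (Polynomial K)).mp htop
  simp only [smul_eq_mul] at ha
  -- clear denominators of the Bézout coefficients
  choose cb hcb using fun i => IsLocalization.integerNormalization_map_to_map A⁰ (a i)
  have hcb' : ∀ i, (IsLocalization.integerNormalization A⁰ (a i)).map f =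
      Polynomial.C (f ((cb i : A))) * a i := fun i => (hcb i).trans (hsmul _ _)
  set cA : A := ∏ i, (cb i : A) with hcAdef
  have hcA0 : cA ≠ 0 := by
    rw [hcAdef]
    exact Finset.prod_ne_zero_iff.mpr fun i _ => nonZeroDivisors.ne_zero (cb i).2
  set E' : Fin s → Polynomial A := fun i =>
    Polynomial.C (∏ k ∈ Finset.univ.erase i, (cb k : A)) *
      IsLocalization.integerNormalization A⁰ (a i) with hE'
  have key : ∑ i, E' i * p i = Polynomial.C cA := by
    apply Polynomial.map_injective f finj
    rw [← Polynomial.coe_mapRingHom, map_sum, Polynomial.coe_mapRingHom, Polynomial.map_C]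
    have hterm : ∀ i : Fin s, (E' i * p i).map f = Polynomial.C (f cA) * (a i * pK i) := by
      intro i
      rw [Polynomial.map_mul, hE', Polynomial.map_mul, Polynomial.map_C, hcb' i]
      rw [← mul_assoc, ← mul_assoc, ← Polynomial.C_mul, ← map_mul f,
        Finset.prod_erase_mul Finset.univ _ (Finset.mem_univ i), ← hcAdef, mul_assoc]
    rw [Finset.sum_congr rfl fun i _ => hterm i, ← Finset.mul_sum, ha, mul_one]
  refine ⟨fun i => e.symm (E' i), e.symm (Polynomial.C cA), ?_, ?_, ?_⟩
  · intro h0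
    apply hcA0
    have h1 := congrArg e h0
    rw [e.apply_symm_apply, map_zero] at h1
    exact Polynomial.C_eq_zero.mp h1
  · have h1 := natDegree_finSuccEquiv (e.symm (Polynomial.C cA))
    rw [← he, e.apply_symm_apply, Polynomial.natDegree_C] at h1
    exact h1.symm
  · apply e.injective
    rw [map_sum, e.apply_symm_apply]
    simp only [map_mul, e.apply_symm_apply]
    exact key

set_option maxHeartbeats 1000000 in
/-- Over a UFD `Z` with fraction field `Q`, if `P_1,…,P_s ∈ Z[x]` are nonzero
and coprime in `Q[x]`, then there is a nonzero `R₀ ∈ Z` such that for every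
prime ideal `𝔭` not containing `R₀`, the reductions of the `P_i` modulo `𝔭`
are coprime in `k^𝔭[x]`, where `k^𝔭 = Frac(Z/𝔭)`. -/
theorem stmt13 (Z Q : Type*) [CommRing Z] [IsDomain Z] [UniqueFactorizationMonoid Z]
    [Field Q] [Algebra Z Q] [IsFractionRing Z Q]
    (s r : ℕ) (hs : 2 ≤ s) (hr : 1 ≤ r)
    (P : Fin s → MvPolynomial (Fin r) Z) (hP : ∀ i, P i ≠ 0)
    (hcop : ∀ D : MvPolynomial (Fin r) Q,
      (∀ i, D ∣ (P i).map (algebraMap Z Q)) → D.totalDegree = 0) :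
    ∃ R₀ : Z, R₀ ≠ 0 ∧
      ∀ (𝔭 : Ideal Z) [𝔭.IsPrime], R₀ ∉ 𝔭 →
        ∀ D : MvPolynomial (Fin r) (FractionRing (Z ⧸ 𝔭)),
          (∀ i, D ∣ (P i).map
            ((algebraMap (Z ⧸ 𝔭) (FractionRing (Z ⧸ 𝔭))).comp (Ideal.Quotient.mk 𝔭))) →
          D.totalDegree = 0 := by
  classical
  obtain ⟨n, rfl⟩ : ∃ n, r = n + 1 := ⟨r - 1, by omega⟩
  have i0 : Fin s := ⟨0, by omega⟩
  have key : ∀ j : Fin (n + 1), ∃ (E : Fin s → MvPolynomial (Fin (n + 1)) Z)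
      (H : MvPolynomial (Fin (n + 1)) Z),
      H ≠ 0 ∧ degreeOf j H = 0 ∧ ∑ i, E i * P i = H := by
    intro j
    set τ := Equiv.swap (0 : Fin (n + 1)) j with hτ
    obtain ⟨E, G, hG0, hGdeg, hsum⟩ := my_bezout_aux Z Q s n i0 (fun i => rename τ (P i))
      (fun i h0 => hP i (by
        have h1 := congrArg (rename ⇑τ.symm) h0
        rwa [rename_rename, Equiv.symm_comp_self, rename_id, map_zero] at h1))
      (fun D hD => by
        have hD' : ∀ i, rename ⇑τ.symm D ∣ (P i).map (algebraMap Z Q) := by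
          intro i
          have h1 : D ∣ rename τ ((P i).map (algebraMap Z Q)) := by
            rw [← map_rename]
            exact hD i
          have h2 := _root_.map_dvd (rename (R := Q) ⇑τ.symm) h1
          rwa [rename_rename, Equiv.symm_comp_self, rename_id] at h2
        have h3 := hcop _ hD'
        have h4 : D.totalDegree ≤ (rename ⇑τ.symm D).totalDegree := by
          conv_lhs => rw [show D = rename ⇑τ (rename ⇑τ.symm D) by
            rw [rename_rename, Equiv.self_comp_symm, rename_id_apply]]
          exact totalDegree_rename_le _ _
        omega)
    have hτ0 : τ.symm 0 = j := by
      rw [hτ, Equiv.symm_swap, Equiv.swap_apply_left]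
    refine ⟨fun i => rename ⇑τ.symm (E i), rename ⇑τ.symm G, ?_, ?_, ?_⟩
    · intro h0
      apply hG0
      have h1 := congrArg (rename ⇑τ) h0
      rwa [rename_rename, Equiv.self_comp_symm, rename_id, map_zero] at h1
    · have h1 := degreeOf_rename_of_injective (p := G) (f := ⇑τ.symm) τ.symm.injective 0
      rwa [hτ0, hGdeg] at h1
    · have h1 := congrArg (rename ⇑τ.symm) hsum
      rw [map_sum] at h1
      simp only [map_mul, rename_rename, Equiv.symm_comp_self, rename_id] at h1
      exact h1
  choose E H hH0 hHdeg hHsum using key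
  choose m hm using fun j => ne_zero_iff.mp (hH0 j)
  refine ⟨∏ j, coeff (m j) (H j), Finset.prod_ne_zero_iff.mpr fun j _ => hm j, ?_⟩
  intro 𝔭 h𝔭 hR D hD
  set k := FractionRing (Z ⧸ 𝔭) with hk
  set φ := (algebraMap (Z ⧸ 𝔭) k).comp (Ideal.Quotient.mk 𝔭) with hφ
  have hκ : ∀ j, φ (coeff (m j) (H j)) ≠ 0 := by
    intro j h0
    apply hR
    have h1 : coeff (m j) (H j) ∈ 𝔭 := by
      rw [hφ, RingHom.comp_apply] at h0
      have h2 : Ideal.Quotient.mk 𝔭 (coeff (m j) (H j)) = 0 :=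
        IsFractionRing.injective (Z ⧸ 𝔭) k (by simpa using h0)
      rwa [Ideal.Quotient.eq_zero_iff_mem] at h2
    obtain ⟨t, ht⟩ := Finset.dvd_prod_of_mem (fun j => coeff (m j) (H j)) (Finset.mem_univ j)
    rw [ht]
    exact Ideal.mul_mem_right _ _ h1
  apply my_totalDegree_eq_zero
  intro j
  have hdvd : D ∣ (H j).map φ := by
    have h1 : (H j).map φ = ∑ i, (E j i).map φ * (P i).map φ := by
      rw [← hHsum j, show (MvPolynomial.map φ) (∑ i, E j i * P i)
        = ∑ i, (MvPolynomial.map φ) (E j i * P i) from map_sum (MvPolynomial.map φ) _ _]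
      simp only [map_mul]
    rw [h1]
    exact Finset.dvd_sum fun i _ => Dvd.dvd.mul_left (hD i) _
  have hne : (H j).map φ ≠ 0 := by
    intro h0
    exact hκ j (by rw [← MvPolynomial.coeff_map, h0, coeff_zero])
  have h5 := my_degreeOf_le_of_dvd j hdvd hne
  have h6 := my_degreeOf_map_le φ j (H j)
  have h7 := hHdeg j
  omega
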